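/- For every s > p > 1 and every measurable set Ω ⊂ ℝ^d of finite measure, ∑_Q |Q|^{s/p − s} |Ω ∩ Q|^s ≤ C(s,p,d) |Ω|^{s/p}, where the sum is over all dyadic cubes Q in ℝ^d. -/

import Mathlib

open MeasureTheory Real ENNReal NNReal

noncomputable section

/-- The dyadic cube `2^k([0,1)^d + n)` in `ℝ^d`. -/
def dyadicCube (d : ℕ) (k : ℤ) (n : Fin d → ℤ) : Set (EuclideanSpace ℝ (Fin d)) :=
  {x | ∀ i : Fin d, (n i : ℝ) * 2 ^ k ≤ x i ∧ x i < ((n i : ℝ) + 1) * 2 ^ k}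

lemma dyadicCube_eq_preimage (d : ℕ) (k : ℤ) (n : Fin d → ℤ) :
    dyadicCube d k n = (MeasurableEquiv.toLp 2 (Fin d → ℝ)).symm ⁻¹'
      (Set.univ.pi fun i => Set.Ico ((n i : ℝ) * 2 ^ k) (((n i : ℝ) + 1) * 2 ^ k)) := by
  ext x
  simp only [dyadicCube, Set.mem_preimage, Set.mem_pi, Set.mem_univ, forall_true_left,
    Set.mem_Ico, Set.mem_setOf_eq]
  rfl

lemma measurableSet_dyadicCube (d : ℕ) (k : ℤ) (n : Fin d → ℤ) :
    MeasurableSet (dyadicCube d k n) := by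
  rw [dyadicCube_eq_preimage]
  exact (MeasurableEquiv.toLp 2 (Fin d → ℝ)).symm.measurable
    (MeasurableSet.univ_pi fun i => measurableSet_Ico)

lemma volume_dyadicCube (d : ℕ) (k : ℤ) (n : Fin d → ℤ) :
    volume (dyadicCube d k n) = (2 : ℝ≥0∞) ^ (((k * d : ℤ) : ℝ)) := by
  rw [dyadicCube_eq_preimage,
    (EuclideanSpace.volume_preserving_symm_measurableEquiv_toLp (Fin d)).measure_preimage
      (MeasurableSet.univ_pi fun i => measurableSet_Ico).nullMeasurableSet]
  rw [volume_pi_pi]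
  have h1 : ∀ i : Fin d, volume (Set.Ico ((n i : ℝ) * 2 ^ k) (((n i : ℝ) + 1) * 2 ^ k))
      = ENNReal.ofReal ((2:ℝ) ^ k) := by
    intro i
    rw [Real.volume_Ico]
    ring_nf
  simp only [h1, Finset.prod_const, Finset.card_univ, Fintype.card_fin]
  rw [← ENNReal.ofReal_pow (by positivity)]
  rw [show ((2:ℝ)^k)^d = (2:ℝ)^(((k * d : ℤ))) by
    rw [zpow_mul]; norm_num]
  rw [show ((2:ℝ)^((k * d : ℤ))) = (2:ℝ) ^ (((k * d : ℤ) : ℝ)) by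
    rw [Real.rpow_intCast]]
  rw [← ENNReal.ofReal_rpow_of_pos (by norm_num)]
  norm_num

lemma mem_dyadicCube_iff (d : ℕ) (k : ℤ) (n : Fin d → ℤ) (x : EuclideanSpace ℝ (Fin d)) :
    x ∈ dyadicCube d k n ↔ ∀ i : Fin d, n i = ⌊x i / (2:ℝ) ^ k⌋ := by
  have h2 : (0:ℝ) < 2 ^ k := zpow_pos (by norm_num) k
  simp only [dyadicCube, Set.mem_setOf_eq]
  refine forall_congr' fun i => ?_
  rw [eq_comm, Int.floor_eq_iff, le_div_iff₀ h2, div_lt_iff₀ h2]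

lemma tsum_volume_inter_dyadicCube (d : ℕ) (k : ℤ) (Ω : Set (EuclideanSpace ℝ (Fin d)))
    (hΩ : MeasurableSet Ω) :
    ∑' n : Fin d → ℤ, volume (Ω ∩ dyadicCube d k n) = volume Ω := by
  rw [← measure_iUnion]
  · congr 1
    ext x
    simp only [Set.mem_iUnion, Set.mem_inter_iff]
    constructor
    · rintro ⟨n, hx, _⟩; exact hx
    · intro hx
      exact ⟨fun i => ⌊x i / (2:ℝ) ^ k⌋, hx, (mem_dyadicCube_iff d k _ x).2 fun i => rfl⟩
  · intro a b hab
    simp only [Function.onFun, Set.disjoint_left]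
    intro x hxa hxb
    apply hab
    funext i
    rw [(mem_dyadicCube_iff d k a x).1 hxa.2 i, (mem_dyadicCube_iff d k b x).1 hxb.2 i]
  · intro n
    exact hΩ.inter (by
      rw [show dyadicCube d k n = (MeasurableEquiv.toLp 2 (Fin d → ℝ)).symm ⁻¹'
        (Set.univ.pi fun i => Set.Ico ((n i : ℝ) * 2 ^ k) (((n i : ℝ) + 1) * 2 ^ k)) by
          ext x; simp only [dyadicCube, Set.mem_preimage, Set.mem_pi, Set.mem_univ,
            forall_true_left, Set.mem_Ico, Set.mem_setOf_eq]; rfl]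
      exact (MeasurableEquiv.toLp 2 (Fin d → ℝ)).symm.measurable
        (MeasurableSet.univ_pi fun i => measurableSet_Ico))

lemma two_rpow_int_eq (z : ℤ) : (2:ℝ≥0∞) ^ ((z:ℝ)) = ENNReal.ofReal ((2:ℝ)^z) := by
  rw [show ((2:ℝ)^z) = (2:ℝ)^((z:ℝ)) from (Real.rpow_intCast 2 z).symm,
      ← ENNReal.ofReal_rpow_of_pos two_pos]
  norm_num

lemma two_rpow_add (x y : ℝ) : (2:ℝ≥0∞) ^ (x + y) = 2 ^ x * 2 ^ y :=
  ENNReal.rpow_add x y two_ne_zero ENNReal.ofNat_ne_top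

lemma ennreal_rpow_anti {x y : ℝ≥0∞} {z : ℝ} (hxy : x ≤ y) (hz : z ≤ 0) : y ^ z ≤ x ^ z := by
  have h := ENNReal.inv_le_inv.2 (ENNReal.rpow_le_rpow hxy (neg_nonneg.2 hz))
  rwa [← ENNReal.rpow_neg, ← ENNReal.rpow_neg, neg_neg] at h

/-- For every `s > p > 1` there is a constant `C = C(s,p,d)` so that for
every measurable `Ω ⊂ ℝ^d` of finite measure,
`∑_Q |Q|^{s/p - s} |Ω ∩ Q|^s ≤ C |Ω|^{s/p}`, the sum over all dyadic cubes `Q`. -/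
theorem dyadic_cube_sum_bound (d : ℕ) (hd : 1 ≤ d) (s p : ℝ) (hp : 1 < p) (hs : p < s) :
    ∃ C : ℝ≥0∞, C ≠ ∞ ∧
      ∀ Ω : Set (EuclideanSpace ℝ (Fin d)), MeasurableSet Ω → volume Ω < ∞ →
        (∑' q : ℤ × (Fin d → ℤ),
            ((2 : ℝ≥0∞) ^ (q.1 * d)) ^ (s / p - s) * (volume (Ω ∩ dyadicCube d q.1 q.2)) ^ s)
          ≤ C * (volume Ω) ^ (s / p) := by
  have hp0 : (0:ℝ) < p := by linarith
  have hs0 : (0:ℝ) < s := by linarith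
  set a : ℝ := s / p - s with ha
  set b : ℝ := s / p - 1 with hb
  have hspgt : 1 < s / p := (one_lt_div hp0).2 hs
  have hbpos : 0 < b := by rw [hb]; linarith
  have haneg : a < 0 := by
    have : s / p < s := div_lt_self hs0 hp
    rw [ha]; linarith
  have hab : a + (s - 1) = b := by rw [ha, hb]; ring
  have hD1 : (1:ℝ) ≤ (d:ℝ) := by exact_mod_cast hd
  have hr1 : (2:ℝ≥0∞) ^ (-((d:ℝ) * b)) < 1 := by
    calc (2:ℝ≥0∞) ^ (-((d:ℝ) * b)) < 2 ^ (0:ℝ) :=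
          ENNReal.rpow_lt_rpow_of_exponent_lt one_lt_two (by norm_num) (by nlinarith)
      _ = 1 := by simp
  have hr2 : (2:ℝ≥0∞) ^ ((d:ℝ) * a) < 1 := by
    calc (2:ℝ≥0∞) ^ ((d:ℝ) * a) < 2 ^ (0:ℝ) :=
          ENNReal.rpow_lt_rpow_of_exponent_lt one_lt_two (by norm_num) (by nlinarith)
      _ = 1 := by simp
  refine ⟨(1 - (2:ℝ≥0∞) ^ (-((d:ℝ) * b)))⁻¹ + (1 - (2:ℝ≥0∞) ^ ((d:ℝ) * a))⁻¹, ?_, ?_⟩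
  · apply ENNReal.add_ne_top.2
    constructor <;>
      simp only [Ne, ENNReal.inv_eq_top, tsub_eq_zero_iff_le, not_le] <;> assumption
  intro Ω hΩ hΩfin
  set V := volume Ω with hV
  by_cases hV0 : V = 0
  · have hz : ∀ q : ℤ × (Fin d → ℤ),
        ((2 : ℝ≥0∞) ^ (q.1 * d)) ^ (s / p - s) * (volume (Ω ∩ dyadicCube d q.1 q.2)) ^ s = 0 := by
      intro q
      have : volume (Ω ∩ dyadicCube d q.1 q.2) = 0 :=
        measure_mono_null Set.inter_subset_left hV0
      rw [this, ENNReal.zero_rpow_of_pos hs0, mul_zero]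
    simp only [ha, hz, tsum_zero]
    exact zero_le
  -- main case
  have hVne : V ≠ ∞ := hΩfin.ne
  have hVt : 0 < V.toReal := ENNReal.toReal_pos hV0 hVne
  have hc : 1 < (2:ℝ) ^ d := one_lt_pow₀ (by norm_num) (by omega)
  obtain ⟨m, hm1, hm2⟩ := exists_mem_Ico_zpow hVt hc
  have hcast : ∀ j : ℤ, ((2:ℝ) ^ d) ^ j = (2:ℝ) ^ ((j * d : ℤ)) := by
    intro j
    rw [← zpow_natCast (2:ℝ) d, ← zpow_mul, mul_comm]
  have hmle : (2:ℝ≥0∞) ^ (((m * d : ℤ) : ℝ)) ≤ V := by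
    rw [two_rpow_int_eq, ← hcast, ← ENNReal.ofReal_toReal hVne]
    exact ENNReal.ofReal_le_ofReal hm1
  have hmlt : V ≤ (2:ℝ≥0∞) ^ ((((m + 1) * d : ℤ) : ℝ)) := by
    rw [two_rpow_int_eq, ← hcast, ← ENNReal.ofReal_toReal hVne]
    exact ENNReal.ofReal_le_ofReal hm2.le
  have hVsp : V ^ b * V = V ^ (s / p) := by
    rw [show V ^ (s / p) = V ^ (b + 1) by rw [hb]; ring_nf,
      ENNReal.rpow_add _ _ hV0 hVne, ENNReal.rpow_one]
  -- per-level bound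
  have level : ∀ k : ℤ, ∑' n : Fin d → ℤ, (volume (Ω ∩ dyadicCube d k n)) ^ s
      ≤ (min ((2:ℝ≥0∞) ^ (((k * d : ℤ) : ℝ))) V) ^ (s - 1) * V := by
    intro k
    set M := min ((2:ℝ≥0∞) ^ (((k * d : ℤ) : ℝ))) V with hM
    have hvle : ∀ n, volume (Ω ∩ dyadicCube d k n) ≤ M := by
      intro n
      refine le_min ?_ (measure_mono Set.inter_subset_left)
      rw [← volume_dyadicCube d k n]
      exact measure_mono Set.inter_subset_right
    calc ∑' n : Fin d → ℤ, (volume (Ω ∩ dyadicCube d k n)) ^ s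
        ≤ ∑' n : Fin d → ℤ, M ^ (s - 1) * volume (Ω ∩ dyadicCube d k n) := by
          refine ENNReal.tsum_le_tsum fun n => ?_
          set v := volume (Ω ∩ dyadicCube d k n) with hv
          by_cases hv0 : v = 0
          · rw [hv0, ENNReal.zero_rpow_of_pos hs0, mul_zero]
          · have hvtop : v ≠ ∞ :=
              (lt_of_le_of_lt (measure_mono Set.inter_subset_left) hΩfin).ne
            have h1 : v ^ s = v ^ (s - 1) * v ^ (1:ℝ) := by
              rw [← ENNReal.rpow_add _ _ hv0 hvtop]; norm_num
            rw [h1, ENNReal.rpow_one]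
            exact mul_le_mul_left (ENNReal.rpow_le_rpow (hvle n) (by linarith)) v
      _ = M ^ (s - 1) * V := by
          rw [ENNReal.tsum_mul_left, tsum_volume_inter_dyadicCube d k Ω hΩ]
  -- the ℤ-indexed sum
  set g : ℤ → ℝ≥0∞ := fun k =>
    (2:ℝ≥0∞) ^ (((k * d : ℤ) : ℝ) * a)
      * ((min ((2:ℝ≥0∞) ^ (((k * d : ℤ) : ℝ))) V) ^ (s - 1) * V) with hg
  have brA : ∑' n : ℕ, g (m - n) ≤ (1 - (2:ℝ≥0∞) ^ (-((d:ℝ) * b)))⁻¹ * V ^ (s / p) := by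
    have heq : ∀ n : ℕ, g (m - n)
        = (2:ℝ≥0∞) ^ ((((m * d : ℤ)) : ℝ) * b) * V * ((2:ℝ≥0∞) ^ (-((d:ℝ) * b))) ^ n := by
      intro n
      have hle : (2:ℝ≥0∞) ^ ((((m - (n:ℤ)) * d : ℤ)) : ℝ) ≤ V := by
        refine le_trans (ENNReal.rpow_le_rpow_of_exponent_le one_le_two ?_) hmle
        push_cast
        nlinarith [Nat.cast_nonneg (α := ℝ) n]
      have hexp : ((((m - (n:ℤ)) * d : ℤ)) : ℝ) * a + ((((m - (n:ℤ)) * d : ℤ)) : ℝ) * (s - 1)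
          = (((m * d : ℤ)) : ℝ) * b + (-((d:ℝ) * b)) * n := by
        rw [ha, hb]; push_cast; ring
      calc g (m - n)
          = 2 ^ (((((m - (n:ℤ)) * d : ℤ)) : ℝ) * a)
            * (2 ^ (((((m - (n:ℤ)) * d : ℤ)) : ℝ) * (s - 1)) * V) := by
            rw [hg]
            simp only
            rw [min_eq_left hle, ← ENNReal.rpow_mul]
        _ = 2 ^ (((((m - (n:ℤ)) * d : ℤ)) : ℝ) * a + ((((m - (n:ℤ)) * d : ℤ)) : ℝ) * (s - 1))
              * V := by rw [two_rpow_add]; ring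
        _ = (2:ℝ≥0∞) ^ ((((m * d : ℤ)) : ℝ) * b) * V * ((2:ℝ≥0∞) ^ (-((d:ℝ) * b))) ^ n := by
            rw [hexp, two_rpow_add, ← ENNReal.rpow_natCast ((2:ℝ≥0∞) ^ (-((d:ℝ) * b))) n,
              ← ENNReal.rpow_mul]
            ring
    have hcb : (2:ℝ≥0∞) ^ ((((m * d : ℤ)) : ℝ) * b) ≤ V ^ b := by
      rw [ENNReal.rpow_mul]
      exact ENNReal.rpow_le_rpow hmle hbpos.le
    calc ∑' n : ℕ, g (m - n)
        = ∑' n : ℕ, (2:ℝ≥0∞) ^ ((((m * d : ℤ)) : ℝ) * b) * V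
            * ((2:ℝ≥0∞) ^ (-((d:ℝ) * b))) ^ n := tsum_congr heq
      _ = (2:ℝ≥0∞) ^ ((((m * d : ℤ)) : ℝ) * b) * V
            * ∑' n : ℕ, ((2:ℝ≥0∞) ^ (-((d:ℝ) * b))) ^ n := ENNReal.tsum_mul_left
      _ = (2:ℝ≥0∞) ^ ((((m * d : ℤ)) : ℝ) * b) * V
            * (1 - (2:ℝ≥0∞) ^ (-((d:ℝ) * b)))⁻¹ := by rw [ENNReal.tsum_geometric]
      _ ≤ V ^ b * V * (1 - (2:ℝ≥0∞) ^ (-((d:ℝ) * b)))⁻¹ :=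
          mul_le_mul_left (mul_le_mul_left hcb V) _
      _ = (1 - (2:ℝ≥0∞) ^ (-((d:ℝ) * b)))⁻¹ * V ^ (s / p) := by rw [hVsp]; ring
  have brB : ∑' n : ℕ, g ((n : ℤ) + (m + 1))
      ≤ (1 - (2:ℝ≥0∞) ^ ((d:ℝ) * a))⁻¹ * V ^ (s / p) := by
    have hbd : ∀ n : ℕ, g ((n : ℤ) + (m + 1))
        ≤ (2:ℝ≥0∞) ^ (((((m + 1) * d : ℤ)) : ℝ) * a) * (V ^ (s - 1) * V)
            * ((2:ℝ≥0∞) ^ ((d:ℝ) * a)) ^ n := by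
      intro n
      have hexp : (((((n : ℤ) + (m + 1)) * d : ℤ)) : ℝ) * a
          = ((((m + 1) * d : ℤ)) : ℝ) * a + ((d:ℝ) * a) * n := by
        push_cast; ring
      calc g ((n : ℤ) + (m + 1))
          ≤ (2:ℝ≥0∞) ^ ((((((n : ℤ) + (m + 1)) * d : ℤ)) : ℝ) * a) * (V ^ (s - 1) * V) := by
            rw [hg]; simp only
            exact mul_le_mul_right (mul_le_mul_left
              (ENNReal.rpow_le_rpow (min_le_right _ _) (by linarith)) V) _
        _ = (2:ℝ≥0∞) ^ (((((m + 1) * d : ℤ)) : ℝ) * a) * (V ^ (s - 1) * V)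
              * ((2:ℝ≥0∞) ^ ((d:ℝ) * a)) ^ n := by
            rw [hexp, two_rpow_add, ← ENNReal.rpow_natCast ((2:ℝ≥0∞) ^ ((d:ℝ) * a)) n,
              ← ENNReal.rpow_mul]
            ring
    have hca : (2:ℝ≥0∞) ^ (((((m + 1) * d : ℤ)) : ℝ) * a) ≤ V ^ a := by
      rw [ENNReal.rpow_mul]
      exact ennreal_rpow_anti hmlt haneg.le
    have hVab : V ^ a * (V ^ (s - 1) * V) = V ^ (s / p) := by
      rw [← mul_assoc, ← ENNReal.rpow_add _ _ hV0 hVne, hab, hVsp]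
    calc ∑' n : ℕ, g ((n : ℤ) + (m + 1))
        ≤ ∑' n : ℕ, (2:ℝ≥0∞) ^ (((((m + 1) * d : ℤ)) : ℝ) * a) * (V ^ (s - 1) * V)
            * ((2:ℝ≥0∞) ^ ((d:ℝ) * a)) ^ n := ENNReal.tsum_le_tsum hbd
      _ = (2:ℝ≥0∞) ^ (((((m + 1) * d : ℤ)) : ℝ) * a) * (V ^ (s - 1) * V)
            * (1 - (2:ℝ≥0∞) ^ ((d:ℝ) * a))⁻¹ := by
          rw [ENNReal.tsum_mul_left, ENNReal.tsum_geometric]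
      _ ≤ V ^ a * (V ^ (s - 1) * V) * (1 - (2:ℝ≥0∞) ^ ((d:ℝ) * a))⁻¹ :=
          mul_le_mul_left (mul_le_mul_left hca _) _
      _ = (1 - (2:ℝ≥0∞) ^ ((d:ℝ) * a))⁻¹ * V ^ (s / p) := by rw [hVab]; ring
  have hgsum : ∑' k : ℤ, g k
      ≤ ((1 - (2:ℝ≥0∞) ^ (-((d:ℝ) * b)))⁻¹ + (1 - (2:ℝ≥0∞) ^ ((d:ℝ) * a))⁻¹) * V ^ (s / p) := by
    have e1 : ∑' k : ℤ, g k = ∑' k : ℤ, g (k + (m + 1)) := by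
      rw [← (Equiv.addRight (m + 1)).tsum_eq g]
      exact tsum_congr fun k => rfl
    rw [e1, tsum_of_nat_of_neg_add_one ENNReal.summable ENNReal.summable]
    have e2 : ∀ n : ℕ, g (-((n : ℤ) + 1) + (m + 1)) = g (m - n) := by
      intro n; congr 1; ring
    rw [tsum_congr e2, add_mul]
    exact (add_le_add brB brA).trans_eq (add_comm _ _)
  -- assemble
  calc (∑' q : ℤ × (Fin d → ℤ),
          ((2 : ℝ≥0∞) ^ (q.1 * d)) ^ (s / p - s) * (volume (Ω ∩ dyadicCube d q.1 q.2)) ^ s)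
      = ∑' k : ℤ, ∑' n : Fin d → ℤ,
          (2:ℝ≥0∞) ^ (((k * d : ℤ) : ℝ) * a) * (volume (Ω ∩ dyadicCube d k n)) ^ s := by
        rw [ENNReal.tsum_prod']
        refine tsum_congr fun k => tsum_congr fun n => ?_
        rw [← ENNReal.rpow_intCast 2 (k * d), ← ENNReal.rpow_mul, ha]
    _ = ∑' k : ℤ, (2:ℝ≥0∞) ^ (((k * d : ℤ) : ℝ) * a)
          * ∑' n : Fin d → ℤ, (volume (Ω ∩ dyadicCube d k n)) ^ s :=
        tsum_congr fun k => ENNReal.tsum_mul_left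
    _ ≤ ∑' k : ℤ, g k := ENNReal.tsum_le_tsum fun k => mul_le_mul_right (level k) _
    _ ≤ ((1 - (2:ℝ≥0∞) ^ (-((d:ℝ) * b)))⁻¹ + (1 - (2:ℝ≥0∞) ^ ((d:ℝ) * a))⁻¹) * V ^ (s / p) :=
        hgsum
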